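/- Let x and γ be n×n real matrices. Then the map s ↦ exp(x + s·γ) (matrix exponential of the line through x in direction γ) is twice differentiable in s, and its second derivative at s = 0 equals exp(x)·( D² + C ), where D = ∑_{i=0}^∞ ((−1)^i/(i+1)!)·ad_x^i(γ) = dexp(−x)(γ) (and D² is the matrix square of D), and C = ∑_{i=1}^∞ ((−1)^i/(i+1)!) ∑_{r=0}^{i−1} ad_x^r( ad_γ( ad_x^{i−1−r}(γ) ) ). (Lemma 2 of the Appendix, the second-directional-derivative formula Δ = X·(dexp_{−x}(γ))² + X·C.) -/

import Mathlib

open NormedSpace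

section FrozenAdM
attribute [local instance] Matrix.normedAddCommGroup Matrix.normedSpace

/-- The adjoint operator `ad_x : y ↦ x*y - y*x` on `n × n` real matrices. -/
noncomputable def adM {n : ℕ} (x : Matrix (Fin n) (Fin n) ℝ) :
    Module.End ℝ (Matrix (Fin n) (Fin n) ℝ) :=
  LinearMap.mulLeft ℝ x - LinearMap.mulRight ℝ x

end FrozenAdM

section Aux
variable {n : ℕ}

attribute [local instance] Matrix.linftyOpNormedRing Matrix.linftyOpNormedAlgebra

local notation "Mat" => Matrix (Fin n) (Fin n) ℝ

/-- copy of `adM`, defined early. -/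
noncomputable def adE {n : ℕ} (x : Matrix (Fin n) (Fin n) ℝ) :
    Module.End ℝ (Matrix (Fin n) (Fin n) ℝ) :=
  LinearMap.mulLeft ℝ x - LinearMap.mulRight ℝ x

lemma adE_apply (x y : Mat) : adE x y = x * y - y * x := rfl

/-- `∑_{j<k} b^j g b^(k-1-j)`, the derivative of `b^k` in direction `g`. -/
noncomputable def Qsum (b g : Mat) (k : ℕ) : Mat :=
  ∑ j ∈ Finset.range k, b ^ j * g * b ^ (k - 1 - j)

@[simp] lemma Qsum_zero (b g : Mat) : Qsum b g 0 = 0 := by simp [Qsum]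

lemma Qsum_succ (b g : Mat) (k : ℕ) : Qsum b g (k + 1) = Qsum b g k * b + b ^ k * g := by
  unfold Qsum
  rw [Finset.sum_range_succ, Finset.sum_mul]
  congr 1
  · refine Finset.sum_congr rfl fun j hj => ?_
    rw [Finset.mem_range] at hj
    have h : k + 1 - 1 - j = (k - 1 - j) + 1 := by omega
    rw [h, pow_succ, ← mul_assoc]
  · have h : k + 1 - 1 - k = 0 := by omega
    rw [h, pow_zero, mul_one]

/-- `∑_{r<i} ad_b^r (ad_g (ad_b^(i-1-r) g))`, the derivative of `ad_b^i g` in direction `g`. -/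
noncomputable def adsum (b g : Mat) (i : ℕ) : Mat :=
  ∑ r ∈ Finset.range i, (adE b ^ r) (adE g ((adE b ^ (i - 1 - r)) g))

@[simp] lemma adsum_zero (b g : Mat) : adsum b g 0 = 0 := by simp [adsum]

lemma adsum_succ (b g : Mat) (i : ℕ) :
    adsum b g (i + 1) = adE b (adsum b g i) + adE g ((adE b ^ i) g) := by
  unfold adsum
  rw [Finset.sum_range_succ', map_sum]
  have h1 : ∀ r ∈ Finset.range i,
      (adE b ^ (r + 1)) (adE g ((adE b ^ (i + 1 - 1 - (r + 1))) g))
        = adE b ((adE b ^ r) (adE g ((adE b ^ (i - 1 - r)) g))) := by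
    intro r hr
    rw [Finset.mem_range] at hr
    have h : i + 1 - 1 - (r + 1) = i - 1 - r := by omega
    rw [h, pow_succ', Module.End.mul_apply]
  rw [Finset.sum_congr rfl h1]
  simp

lemma Qsum_eq_ad (b g : Mat) (k : ℕ) :
    Qsum b g k =
      ∑ i ∈ Finset.range k,
        ((-1 : ℝ) ^ i * (k.choose (i + 1) : ℝ)) • (b ^ (k - 1 - i) * (adE b ^ i) g) := by
  induction k with
  | zero => simp
  | succ k ih =>
    have hX0 : b ^ (k - 0) * (adE b ^ 0) g = b ^ k * g := by simp
    have key : ∀ i ∈ Finset.range k,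
        ((-1 : ℝ) ^ i * (k.choose (i + 1) : ℝ)) • (b ^ (k - 1 - i) * (adE b ^ i) g * b) =
          ((-1 : ℝ) ^ i * (k.choose (i + 1) : ℝ)) • (b ^ (k - i) * (adE b ^ i) g)
            - ((-1 : ℝ) ^ i * (k.choose (i + 1) : ℝ)) • (b ^ (k - 1 - i) * (adE b ^ (i + 1)) g) := by
      intro i hi
      rw [Finset.mem_range] at hi
      have h1 : (adE b ^ i) g * b = b * (adE b ^ i) g - (adE b ^ (i + 1)) g := by
        rw [pow_succ', Module.End.mul_apply, adE_apply]
        abel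
      have h2 : k - 1 - i + 1 = k - i := by omega
      rw [mul_assoc, h1, mul_sub, ← mul_assoc, ← pow_succ, h2, smul_sub]
    rw [Qsum_succ, ih, Finset.sum_mul]
    simp_rw [smul_mul_assoc]
    rw [Finset.sum_congr rfl key, Finset.sum_sub_distrib]
    -- now RHS side
    have hsplit : ∀ i ∈ Finset.range (k+1),
        ((-1 : ℝ) ^ i * ((k+1).choose (i + 1) : ℝ)) • (b ^ (k + 1 - 1 - i) * (adE b ^ i) g) =
          ((-1 : ℝ) ^ i * (k.choose (i + 1) : ℝ)) • (b ^ (k - i) * (adE b ^ i) g)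
            + ((-1 : ℝ) ^ i * (k.choose i : ℝ)) • (b ^ (k - i) * (adE b ^ i) g) := by
      intro i _
      have h : k + 1 - 1 - i = k - i := by omega
      rw [h, Nat.choose_succ_succ', Nat.cast_add, mul_add, add_smul, add_comm]
    rw [Finset.sum_congr rfl hsplit, Finset.sum_add_distrib]
    have e1 : ∑ i ∈ Finset.range (k+1),
        ((-1 : ℝ) ^ i * (k.choose (i + 1) : ℝ)) • (b ^ (k - i) * (adE b ^ i) g)
        = ∑ i ∈ Finset.range k,
        ((-1 : ℝ) ^ i * (k.choose (i + 1) : ℝ)) • (b ^ (k - i) * (adE b ^ i) g) := by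
      rw [Finset.sum_range_succ, Nat.choose_succ_self]
      simp
    have e2 : ∑ i ∈ Finset.range (k+1),
        ((-1 : ℝ) ^ i * (k.choose i : ℝ)) • (b ^ (k - i) * (adE b ^ i) g)
        = b ^ k * g - ∑ i ∈ Finset.range k,
            ((-1 : ℝ) ^ i * (k.choose (i + 1) : ℝ)) • (b ^ (k - 1 - i) * (adE b ^ (i + 1)) g) := by
      rw [Finset.sum_range_succ']
      have h0 : ((-1 : ℝ) ^ 0 * (k.choose 0 : ℝ)) • (b ^ (k - 0) * (adE b ^ 0) g) = b ^ k * g := by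
        simp
      rw [h0]
      have hterm : ∀ i ∈ Finset.range k,
          ((-1 : ℝ) ^ (i + 1) * (k.choose (i + 1) : ℝ)) • (b ^ (k - (i + 1)) * (adE b ^ (i + 1)) g)
            = -(((-1 : ℝ) ^ i * (k.choose (i + 1) : ℝ)) • (b ^ (k - 1 - i) * (adE b ^ (i + 1)) g)) := by
        intro i hi
        rw [Finset.mem_range] at hi
        have h : k - (i + 1) = k - 1 - i := by omega
        rw [h, ← neg_smul]
        congr 1
        ring
      rw [Finset.sum_congr rfl hterm, Finset.sum_neg_distrib]
      abel
    rw [e1, e2]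
    abel

/-- summability helper -/
lemma summable_k_pow_div_factorial (q : ℝ) :
    Summable (fun k : ℕ => (k : ℝ) * q ^ k / (Nat.factorial k : ℝ)) := by
  rw [← summable_nat_add_iff 1]
  have h := (Real.summable_pow_div_factorial q).mul_left q
  refine h.congr fun k => ?_
  have hk : ((k + 1).factorial : ℝ) = (k + 1) * (k.factorial : ℝ) := by
    push_cast [Nat.factorial_succ]; ring
  have hfk : (k.factorial : ℝ) ≠ 0 := Nat.cast_ne_zero.mpr (Nat.factorial_ne_zero k)
  field_simp [hk]
  simp only [Nat.factorial_succ]; push_cast; ring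

lemma norm_adE_pow_apply_le (b g : Mat) (i : ℕ) :
    ‖(adE b ^ i) g‖ ≤ (2 * ‖b‖) ^ i * ‖g‖ := by
  induction i with
  | zero => simp
  | succ i ih =>
    rw [pow_succ', Module.End.mul_apply, adE_apply]
    calc ‖b * (adE b ^ i) g - (adE b ^ i) g * b‖
        ≤ ‖b * (adE b ^ i) g‖ + ‖(adE b ^ i) g * b‖ := norm_sub_le _ _
      _ ≤ ‖b‖ * ‖(adE b ^ i) g‖ + ‖(adE b ^ i) g‖ * ‖b‖ := by
          gcongr <;> [exact norm_mul_le _ _; exact norm_mul_le _ _]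
      _ = 2 * ‖b‖ * ‖(adE b ^ i) g‖ := by ring
      _ ≤ 2 * ‖b‖ * ((2 * ‖b‖) ^ i * ‖g‖) := by
          have h2 : (0:ℝ) ≤ 2 * ‖b‖ := by positivity
          exact mul_le_mul_of_nonneg_left ih h2
      _ = (2 * ‖b‖) ^ (i + 1) * ‖g‖ := by rw [pow_succ]; ring

lemma summable_norm_Dterm (b g : Mat) :
    Summable (fun i : ℕ =>
      ‖((-1 : ℝ) ^ i / ((i + 1).factorial : ℝ)) • ((adE b ^ i) g)‖) := by
  refine Summable.of_nonneg_of_le (fun i => norm_nonneg _) (fun i => ?_)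
    (((Real.summable_pow_div_factorial (2 * ‖b‖)).mul_right ‖g‖))
  rw [norm_smul]
  have h1 : ‖(-1 : ℝ) ^ i / ((i + 1).factorial : ℝ)‖ = (((i+1).factorial : ℝ))⁻¹ := by
    rw [Real.norm_eq_abs, abs_div, abs_pow, abs_neg, abs_one, one_pow, Nat.abs_cast, one_div]
  rw [h1]
  have h2 : (((i+1).factorial : ℝ))⁻¹ ≤ ((i.factorial : ℝ))⁻¹ := by
    apply inv_anti₀
    · exact_mod_cast Nat.factorial_pos i
    · exact_mod_cast Nat.factorial_le (Nat.le_succ i)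
  calc (((i+1).factorial : ℝ))⁻¹ * ‖(adE b ^ i) g‖
      ≤ ((i.factorial : ℝ))⁻¹ * ((2 * ‖b‖) ^ i * ‖g‖) := by
        apply mul_le_mul h2 (norm_adE_pow_apply_le b g i) (norm_nonneg _)
        positivity
    _ = (2 * ‖b‖) ^ i / (i.factorial : ℝ) * ‖g‖ := by ring

lemma summable_Dterm (b g : Mat) :
    Summable (fun i : ℕ => ((-1 : ℝ) ^ i / ((i + 1).factorial : ℝ)) • ((adE b ^ i) g)) :=
  (summable_norm_Dterm b g).of_norm

lemma norm_one_le_mat : ‖(1 : Mat)‖ ≤ 1 := by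
  rcases isEmpty_or_nonempty (Fin n) with h | h
  · have h0 : (1 : Mat) = 0 := by
      ext i j; exact isEmptyElim i
    rw [h0, norm_zero]; norm_num
  · rw [← Matrix.diagonal_one, Matrix.linfty_opNorm_diagonal]
    rw [pi_norm_le_iff_of_nonneg (by norm_num : (0:ℝ) ≤ 1)]
    intro i
    simp

lemma norm_pow_le_mat (b : Mat) {R : ℝ} (hb : ‖b‖ ≤ R) (j : ℕ) :
    ‖b ^ j‖ ≤ (R + 1) ^ j := by
  have hR : (0:ℝ) ≤ R := (norm_nonneg b).trans hb
  induction j with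
  | zero => rw [pow_zero, pow_zero]; exact norm_one_le_mat
  | succ j ih =>
    rw [pow_succ, pow_succ]
    calc ‖b ^ j * b‖ ≤ ‖b ^ j‖ * ‖b‖ := norm_mul_le _ _
      _ ≤ (R + 1) ^ j * (R + 1) := by
          apply mul_le_mul ih (by linarith) (norm_nonneg _) (by positivity)

lemma norm_Qsum_le (b g : Mat) (k : ℕ) {R : ℝ} (hb : ‖b‖ ≤ R) :
    ‖Qsum b g k‖ ≤ (k : ℝ) * ((R + 1) ^ 2) ^ k * ‖g‖ := by
  have hR : (0:ℝ) ≤ R := (norm_nonneg b).trans hb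
  have hR1 : (1:ℝ) ≤ R + 1 := by linarith
  have hterm : ∀ j ∈ Finset.range k, ‖b ^ j * g * b ^ (k - 1 - j)‖ ≤ ((R+1)^2)^k * ‖g‖ := by
    intro j hj
    rw [Finset.mem_range] at hj
    calc ‖b ^ j * g * b ^ (k - 1 - j)‖
        ≤ ‖b ^ j * g‖ * ‖b ^ (k - 1 - j)‖ := norm_mul_le _ _
      _ ≤ ‖b ^ j‖ * ‖g‖ * ‖b ^ (k - 1 - j)‖ := by
          gcongr; exact norm_mul_le _ _
      _ ≤ (R+1) ^ j * ‖g‖ * (R+1) ^ (k - 1 - j) := by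
          gcongr
          · exact norm_pow_le_mat b hb j
          · exact norm_pow_le_mat b hb _
      _ = (R+1) ^ (j + (k - 1 - j)) * ‖g‖ := by rw [pow_add]; ring
      _ ≤ (R+1) ^ (2 * k) * ‖g‖ := by
          gcongr
          · omega
      _ = ((R+1)^2)^k * ‖g‖ := by rw [← pow_mul]
  calc ‖Qsum b g k‖ ≤ ∑ j ∈ Finset.range k, ‖b ^ j * g * b ^ (k - 1 - j)‖ :=
        norm_sum_le _ _
    _ ≤ ∑ _j ∈ Finset.range k, ((R+1)^2)^k * ‖g‖ := Finset.sum_le_sum hterm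
    _ = (k : ℝ) * ((R + 1) ^ 2) ^ k * ‖g‖ := by
        rw [Finset.sum_const, Finset.card_range, nsmul_eq_mul]; ring

lemma norm_adE_pow_le (b y : Mat) (r : ℕ) :
    ‖(adE b ^ r) y‖ ≤ (2 * ‖b‖) ^ r * ‖y‖ := by
  induction r with
  | zero => simp
  | succ r ih =>
    rw [pow_succ', Module.End.mul_apply, adE_apply]
    calc ‖b * (adE b ^ r) y - (adE b ^ r) y * b‖
        ≤ ‖b * (adE b ^ r) y‖ + ‖(adE b ^ r) y * b‖ := norm_sub_le _ _
      _ ≤ ‖b‖ * ‖(adE b ^ r) y‖ + ‖(adE b ^ r) y‖ * ‖b‖ := by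
          gcongr <;> [exact norm_mul_le _ _; exact norm_mul_le _ _]
      _ = 2 * ‖b‖ * ‖(adE b ^ r) y‖ := by ring
      _ ≤ 2 * ‖b‖ * ((2 * ‖b‖) ^ r * ‖y‖) := by
          have h2 : (0:ℝ) ≤ 2 * ‖b‖ := by positivity
          exact mul_le_mul_of_nonneg_left ih h2
      _ = (2 * ‖b‖) ^ (r + 1) * ‖y‖ := by rw [pow_succ]; ring

lemma norm_adsum_le (b g : Mat) (i : ℕ) {R : ℝ} (hb : ‖b‖ ≤ R) :
    ‖adsum b g i‖ ≤ (i : ℝ) * ((2 * R + 1) ^ 2) ^ i * (2 * ‖g‖ * ‖g‖) := by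
  have hR : (0:ℝ) ≤ R := (norm_nonneg b).trans hb
  have hR1 : (1:ℝ) ≤ 2 * R + 1 := by linarith
  have hb2 : 2 * ‖b‖ ≤ 2 * R + 1 := by linarith
  have hterm : ∀ r ∈ Finset.range i,
      ‖(adE b ^ r) (adE g ((adE b ^ (i - 1 - r)) g))‖ ≤ ((2*R+1)^2)^i * (2 * ‖g‖ * ‖g‖) := by
    intro r hr
    rw [Finset.mem_range] at hr
    have h3 : ‖adE g ((adE b ^ (i - 1 - r)) g)‖ ≤ 2 * ‖g‖ * ((2*‖b‖) ^ (i - 1 - r) * ‖g‖) := by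
      have := norm_adE_pow_le g ((adE b ^ (i - 1 - r)) g) 1
      rw [pow_one, pow_one] at this
      calc ‖adE g ((adE b ^ (i - 1 - r)) g)‖
          ≤ 2 * ‖g‖ * ‖(adE b ^ (i - 1 - r)) g‖ := this
        _ ≤ 2 * ‖g‖ * ((2*‖b‖) ^ (i - 1 - r) * ‖g‖) := by
            have h2 : (0:ℝ) ≤ 2 * ‖g‖ := by positivity
            exact mul_le_mul_of_nonneg_left (norm_adE_pow_le b g _) h2
    calc ‖(adE b ^ r) (adE g ((adE b ^ (i - 1 - r)) g))‖
        ≤ (2*‖b‖) ^ r * ‖adE g ((adE b ^ (i - 1 - r)) g)‖ := norm_adE_pow_le b _ r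
      _ ≤ (2*‖b‖) ^ r * (2 * ‖g‖ * ((2*‖b‖) ^ (i - 1 - r) * ‖g‖)) := by
          have h2 : (0:ℝ) ≤ (2*‖b‖) ^ r := by positivity
          exact mul_le_mul_of_nonneg_left h3 h2
      _ = (2*‖b‖) ^ (r + (i - 1 - r)) * (2 * ‖g‖ * ‖g‖) := by rw [pow_add]; ring
      _ ≤ (2*R+1) ^ (r + (i - 1 - r)) * (2 * ‖g‖ * ‖g‖) :=
          mul_le_mul_of_nonneg_right (pow_le_pow_left₀ (by positivity) hb2 _) (by positivity)
      _ ≤ (2*R+1) ^ (2 * i) * (2 * ‖g‖ * ‖g‖) := by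
          have hle : (2*R+1) ^ (r + (i - 1 - r)) ≤ (2*R+1) ^ (2 * i) :=
            pow_le_pow_right₀ hR1 (by omega)
          exact mul_le_mul_of_nonneg_right hle (by positivity)
      _ = ((2*R+1)^2)^i * (2 * ‖g‖ * ‖g‖) := by rw [← pow_mul]
  calc ‖adsum b g i‖
      ≤ ∑ r ∈ Finset.range i, ‖(adE b ^ r) (adE g ((adE b ^ (i - 1 - r)) g))‖ :=
        norm_sum_le _ _
    _ ≤ ∑ _r ∈ Finset.range i, ((2*R+1)^2)^i * (2 * ‖g‖ * ‖g‖) := Finset.sum_le_sum hterm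
    _ = (i : ℝ) * ((2 * R + 1) ^ 2) ^ i * (2 * ‖g‖ * ‖g‖) := by
        rw [Finset.sum_const, Finset.card_range, nsmul_eq_mul]; ring


/-- `dexp(-b)(g)` as a series. -/
noncomputable def Dser (b g : Mat) : Mat :=
  ∑' i : ℕ, ((-1 : ℝ) ^ i / (Nat.factorial (i + 1) : ℝ)) • ((adE b ^ i) g)

lemma summable_Qterm (b g : Mat) :
    Summable (fun k : ℕ => ((k.factorial : ℝ))⁻¹ • Qsum b g k) := by
  apply Summable.of_norm_bounded
    ((summable_k_pow_div_factorial ((‖b‖ + 1) ^ 2)).mul_right ‖g‖)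
  intro k
  rw [norm_smul]
  have h1 : ‖((k.factorial : ℝ))⁻¹‖ = ((k.factorial : ℝ))⁻¹ := by
    rw [Real.norm_eq_abs, abs_of_nonneg]; positivity
  rw [h1]
  have h2 := norm_Qsum_le b g k (le_refl ‖b‖)
  calc ((k.factorial : ℝ))⁻¹ * ‖Qsum b g k‖
      ≤ ((k.factorial : ℝ))⁻¹ * ((k : ℝ) * ((‖b‖ + 1) ^ 2) ^ k * ‖g‖) := by
        apply mul_le_mul_of_nonneg_left h2 (by positivity)
    _ = (k : ℝ) * ((‖b‖ + 1) ^ 2) ^ k / (k.factorial : ℝ) * ‖g‖ := by ring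

lemma cauchy_term (b g : Mat) (k : ℕ) :
    ∑ j ∈ Finset.range (k + 1),
        (((j.factorial : ℝ))⁻¹ • b ^ j) *
          (((-1 : ℝ) ^ (k - j) / (Nat.factorial ((k - j) + 1) : ℝ)) • ((adE b ^ (k - j)) g)) =
      (((k + 1).factorial : ℝ))⁻¹ • Qsum b g (k + 1) := by
  rw [Qsum_eq_ad, Finset.smul_sum]
  rw [← Finset.sum_range_reflect]
  refine Finset.sum_congr rfl fun j hj => ?_
  rw [Finset.mem_range] at hj
  have hjk : j ≤ k := by omega
  have h1 : k + 1 - 1 - j = k - j := by omega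
  have h2 : k - (k - j) = j := by omega
  rw [h1, h2]
  rw [smul_mul_smul_comm, smul_smul]
  have hfact : (((k+1).choose (j+1) : ℝ)) * ((j+1).factorial : ℝ) * ((k-j).factorial : ℝ)
      = ((k+1).factorial : ℝ) := by
    have h3 : j + 1 ≤ k + 1 := by omega
    have h4 := Nat.choose_mul_factorial_mul_factorial h3
    have h5 : k + 1 - (j + 1) = k - j := by omega
    rw [h5] at h4
    exact_mod_cast h4
  have hcoef : (((k - j).factorial : ℝ))⁻¹ * ((-1 : ℝ) ^ j / (Nat.factorial (j + 1) : ℝ))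
      = (((k + 1).factorial : ℝ))⁻¹ * ((-1 : ℝ) ^ j * (((k+1).choose (j+1) : ℝ))) := by
    have hne1 : ((k - j).factorial : ℝ) ≠ 0 := Nat.cast_ne_zero.mpr (Nat.factorial_ne_zero _)
    have hne2 : ((j + 1).factorial : ℝ) ≠ 0 := Nat.cast_ne_zero.mpr (Nat.factorial_ne_zero _)
    have hne3 : (((k + 1)).factorial : ℝ) ≠ 0 := Nat.cast_ne_zero.mpr (Nat.factorial_ne_zero _)
    field_simp
    linear_combination (-1 : ℝ) * hfact
  rw [hcoef]

lemma exp_mul_Dser (b g : Mat) :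
    exp b * Dser b g = ∑' k : ℕ, ((k.factorial : ℝ))⁻¹ • Qsum b g k := by
  have hA : Summable (fun m : ℕ => ‖((m.factorial : ℝ))⁻¹ • b ^ m‖) :=
    norm_expSeries_summable' (𝕂 := ℝ) b
  have hB := summable_norm_Dterm b g
  have hexp : exp b = ∑' m : ℕ, ((m.factorial : ℝ))⁻¹ • b ^ m := by
    rw [exp_eq_tsum ℝ]
  rw [hexp, Dser]
  refine (tsum_mul_tsum_eq_tsum_sum_range_of_summable_norm hA hB).trans
    ((tsum_congr (cauchy_term b g)).trans ?_)
  rw [Summable.tsum_eq_zero_add (summable_Qterm b g)]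
  simp


lemma hasDerivAt_affine (a g : Mat) (s : ℝ) :
    HasDerivAt (fun s : ℝ => a + s • g) g s := by
  have h := ((hasDerivAt_id s).smul_const g).const_add a
  rw [one_smul] at h
  exact h

lemma hasDerivAt_pow_line (a g : Mat) (k : ℕ) (s : ℝ) :
    HasDerivAt (fun s : ℝ => (a + s • g) ^ k) (Qsum (a + s • g) g k) s := by
  induction k with
  | zero =>
    simp only [pow_zero, Qsum_zero]
    exact hasDerivAt_const s (1 : Mat)
  | succ k ih =>
    have hfun : (fun s : ℝ => (a + s • g) ^ (k + 1))
        = fun s : ℝ => (a + s • g) ^ k * (a + s • g) := by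
      funext t; rw [pow_succ]
    rw [hfun, Qsum_succ]
    exact ih.mul (hasDerivAt_affine a g s)

lemma mem_ball_norm_bound (a g : Mat) (s₀ : ℝ) {s : ℝ} (hs : s ∈ Metric.ball s₀ 1) :
    ‖a + s • g‖ ≤ ‖a‖ + (|s₀| + 1) * ‖g‖ := by
  rw [Metric.mem_ball, Real.dist_eq] at hs
  have h1 : |s| ≤ |s₀| + 1 := by
    have := abs_sub_abs_le_abs_sub s s₀
    linarith
  calc ‖a + s • g‖ ≤ ‖a‖ + ‖s • g‖ := norm_add_le _ _
    _ = ‖a‖ + |s| * ‖g‖ := by rw [norm_smul, Real.norm_eq_abs]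
    _ ≤ ‖a‖ + (|s₀| + 1) * ‖g‖ := by
        have := mul_le_mul_of_nonneg_right h1 (norm_nonneg g)
        linarith

lemma hasDerivAt_exp_line (a g : Mat) (s₀ : ℝ) :
    HasDerivAt (fun s : ℝ => exp (a + s • g))
      (exp (a + s₀ • g) * Dser (a + s₀ • g) g) s₀ := by
  rw [exp_mul_Dser]
  have hfun : (fun s : ℝ => exp (a + s • g))
      = fun s : ℝ => ∑' k : ℕ, ((Nat.factorial k : ℝ))⁻¹ • (a + s • g) ^ k := by
    funext t; rw [exp_eq_tsum ℝ]
  rw [hfun]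
  set R : ℝ := ‖a‖ + (|s₀| + 1) * ‖g‖ with hRdef
  refine hasDerivAt_tsum_of_isPreconnected
    (u := fun k : ℕ => (k : ℝ) * ((R + 1) ^ 2) ^ k / (Nat.factorial k : ℝ) * ‖g‖)
    ((summable_k_pow_div_factorial ((R + 1) ^ 2)).mul_right ‖g‖)
    (Metric.isOpen_ball (x := s₀) (ε := 1))
    (convex_ball s₀ 1).isPreconnected
    (fun k s _ => (hasDerivAt_pow_line a g k s).const_smul ((Nat.factorial k : ℝ))⁻¹)
    (fun k s hs => ?_) (Metric.mem_ball_self (by norm_num)) 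
    (expSeries_summable' (𝕂 := ℝ) (a + s₀ • g)) (Metric.mem_ball_self (by norm_num))
  rw [norm_smul]
  have h1 : ‖((Nat.factorial k : ℝ))⁻¹‖ = ((Nat.factorial k : ℝ))⁻¹ := by
    rw [Real.norm_eq_abs, abs_of_nonneg]; positivity
  rw [h1]
  have h2 := norm_Qsum_le (a + s • g) g k (mem_ball_norm_bound a g s₀ hs)
  calc ((Nat.factorial k : ℝ))⁻¹ * ‖Qsum (a + s • g) g k‖
      ≤ ((Nat.factorial k : ℝ))⁻¹ * ((k : ℝ) * ((R + 1) ^ 2) ^ k * ‖g‖) :=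
        mul_le_mul_of_nonneg_left h2 (by positivity)
    _ = (k : ℝ) * ((R + 1) ^ 2) ^ k / (Nat.factorial k : ℝ) * ‖g‖ := by ring

lemma hasDerivAt_ad_pow (a g : Mat) (i : ℕ) (s : ℝ) :
    HasDerivAt (fun s : ℝ => (adE (a + s • g) ^ i) g) (adsum (a + s • g) g i) s := by
  induction i with
  | zero =>
    simp only [pow_zero, Module.End.one_apply, adsum_zero]
    exact hasDerivAt_const s g
  | succ i ih =>
    have hfun : (fun s : ℝ => (adE (a + s • g) ^ (i + 1)) g)
        = fun s : ℝ => (a + s • g) * ((adE (a + s • g) ^ i) g)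
            - ((adE (a + s • g) ^ i) g) * (a + s • g) := by
      funext t; rw [pow_succ', Module.End.mul_apply, adE_apply]
    rw [hfun]
    have h := ((hasDerivAt_affine a g s).mul ih).sub (ih.mul (hasDerivAt_affine a g s))
    have heq : (g * ((adE (a + s • g) ^ i) g) + (a + s • g) * adsum (a + s • g) g i)
        - (adsum (a + s • g) g i * (a + s • g) + ((adE (a + s • g) ^ i) g) * g)
        = adsum (a + s • g) g (i + 1) := by
      rw [adsum_succ, adE_apply, adE_apply]
      abel
    rw [← heq]
    exact h

lemma hasDerivAt_Dser_line (a g : Mat) (s₀ : ℝ) :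
    HasDerivAt (fun s : ℝ => Dser (a + s • g) g)
      (∑' i : ℕ, ((-1 : ℝ) ^ i / (Nat.factorial (i + 1) : ℝ)) • adsum (a + s₀ • g) g i) s₀ := by
  have hfun : (fun s : ℝ => Dser (a + s • g) g)
      = fun s : ℝ => ∑' i : ℕ,
          ((-1 : ℝ) ^ i / (Nat.factorial (i + 1) : ℝ)) • ((adE (a + s • g) ^ i) g) := by
    funext t; rw [Dser]
  rw [hfun]
  set R : ℝ := ‖a‖ + (|s₀| + 1) * ‖g‖ with hRdef
  refine hasDerivAt_tsum_of_isPreconnected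
    (u := fun i : ℕ => (i : ℝ) * ((2 * R + 1) ^ 2) ^ i / (Nat.factorial i : ℝ) * (2 * ‖g‖ * ‖g‖))
    ((summable_k_pow_div_factorial ((2 * R + 1) ^ 2)).mul_right (2 * ‖g‖ * ‖g‖))
    (Metric.isOpen_ball (x := s₀) (ε := 1))
    (convex_ball s₀ 1).isPreconnected
    (fun i s _ => (hasDerivAt_ad_pow a g i s).const_smul
      ((-1 : ℝ) ^ i / (Nat.factorial (i + 1) : ℝ)))
    (fun i s hs => ?_) (Metric.mem_ball_self (by norm_num))
    (summable_Dterm (a + s₀ • g) g) (Metric.mem_ball_self (by norm_num))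
  rw [norm_smul]
  have h1 : ‖(-1 : ℝ) ^ i / (Nat.factorial (i + 1) : ℝ)‖ = ((Nat.factorial (i + 1) : ℝ))⁻¹ := by
    rw [Real.norm_eq_abs, abs_div, abs_pow, abs_neg, abs_one, one_pow, Nat.abs_cast, one_div]
  rw [h1]
  have h2 := norm_adsum_le (a + s • g) g i (mem_ball_norm_bound a g s₀ hs)
  have h3 : ((Nat.factorial (i + 1) : ℝ))⁻¹ ≤ ((Nat.factorial i : ℝ))⁻¹ := by
    apply inv_anti₀
    · exact_mod_cast Nat.factorial_pos i
    · exact_mod_cast Nat.factorial_le (Nat.le_succ i)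
  calc ((Nat.factorial (i + 1) : ℝ))⁻¹ * ‖adsum (a + s • g) g i‖
      ≤ ((Nat.factorial i : ℝ))⁻¹ * ((i : ℝ) * ((2 * R + 1) ^ 2) ^ i * (2 * ‖g‖ * ‖g‖)) := by
        apply mul_le_mul h3 h2 (norm_nonneg _) (by positivity)
    _ = (i : ℝ) * ((2 * R + 1) ^ 2) ^ i / (Nat.factorial i : ℝ) * (2 * ‖g‖ * ‖g‖) := by ring

lemma hasDerivAt_G_line (x γ : Mat) (s : ℝ) :
    HasDerivAt (fun s : ℝ => exp (x + s • γ) * Dser (x + s • γ) γ)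
      ((exp (x + s • γ) * Dser (x + s • γ) γ) * Dser (x + s • γ) γ
        + exp (x + s • γ) *
          (∑' i : ℕ, ((-1 : ℝ) ^ i / (Nat.factorial (i + 1) : ℝ)) • adsum (x + s • γ) γ i)) s :=
  (hasDerivAt_exp_line x γ s).mul (hasDerivAt_Dser_line x γ s)

end Aux

/-- Transfer a derivative statement from the `L∞`-operator-norm structure to the
sup-norm structure (the two norms induce the same topology). -/
theorem transfer_hasDerivAt {n : ℕ} {f : ℝ → Matrix (Fin n) (Fin n) ℝ}
    {f' : Matrix (Fin n) (Fin n) ℝ} {s : ℝ}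
    (h : letI := Matrix.linftyOpNormedRing (α := ℝ) (n := Fin n);
         letI := Matrix.linftyOpNormedAlgebra (α := ℝ) (n := Fin n) (R := ℝ);
         HasDerivAt f f' s) :
    letI := Matrix.normedAddCommGroup (α := ℝ) (m := Fin n) (n := Fin n);
    letI : NormedSpace ℝ (Matrix (Fin n) (Fin n) ℝ) := Matrix.normedSpace;
    HasDerivAt f f' s := by
  letI := Matrix.normedAddCommGroup (α := ℝ) (m := Fin n) (n := Fin n)
  letI : NormedSpace ℝ (Matrix (Fin n) (Fin n) ℝ) := Matrix.normedSpace
  refine hasDerivAt_iff_tendsto_slope.mpr ?_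
  exact (@hasDerivAt_iff_tendsto_slope ℝ _ (Matrix (Fin n) (Fin n) ℝ)
    (@NonUnitalNormedRing.toNormedAddCommGroup _
      (Matrix.linftyOpNormedRing (α := ℝ) (n := Fin n)).toNonUnitalNormedRing)
    (letI := Matrix.linftyOpNormedRing (α := ℝ) (n := Fin n);
      letI := Matrix.linftyOpNormedAlgebra (α := ℝ) (n := Fin n) (R := ℝ);
      NormedAlgebra.toNormedSpace (𝕜 := ℝ) (Matrix (Fin n) (Fin n) ℝ)) f f' s).mp h


attribute [local instance] Matrix.normedAddCommGroup Matrix.normedSpace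

lemma adM_eq {n : ℕ} (x : Matrix (Fin n) (Fin n) ℝ) : adM x = adE x := rfl

/-- **Lemma 2 of the Appendix (second directional derivative of the matrix
exponential).** For matrices `x, γ`, the map `s ↦ exp (x + s • γ)` is twice
differentiable, and its second derivative at `s = 0` equals `exp x * (D² + C)`, where
`D = dexp(−x)(γ) = ∑_{i=0}^∞ ((−1)^i/(i+1)!)·ad_x^i (γ)` and
`C = ∑_{i=1}^∞ ((−1)^i/(i+1)!) ∑_{r=0}^{i−1} ad_x^r (ad_γ (ad_x^{i−1−r} γ))`. -/
theorem second_deriv_exp_line {n : ℕ} (x γ : Matrix (Fin n) (Fin n) ℝ) :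
    (∀ s : ℝ, DifferentiableAt ℝ (fun s : ℝ => exp (x + s • γ)) s) ∧
    (∀ s : ℝ, DifferentiableAt ℝ (deriv (fun s : ℝ => exp (x + s • γ))) s) ∧
    deriv (deriv (fun s : ℝ => exp (x + s • γ))) 0 =
      exp x *
        ((∑' i : ℕ, ((-1 : ℝ) ^ i / (Nat.factorial (i + 1) : ℝ)) • ((adM x ^ i) γ)) *
          (∑' i : ℕ, ((-1 : ℝ) ^ i / (Nat.factorial (i + 1) : ℝ)) • ((adM x ^ i) γ)) +
        ∑' i : ℕ, ((-1 : ℝ) ^ i / (Nat.factorial (i + 1) : ℝ)) •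
          ∑ r ∈ Finset.range i, (adM x ^ r) (adM γ ((adM x ^ (i - 1 - r)) γ))) := by
  have hF : ∀ s : ℝ, HasDerivAt (fun s : ℝ => exp (x + s • γ))
      (exp (x + s • γ) * Dser (x + s • γ) γ) s :=
    fun s => transfer_hasDerivAt (hasDerivAt_exp_line x γ s)
  have hG : ∀ s : ℝ, HasDerivAt (fun s : ℝ => exp (x + s • γ) * Dser (x + s • γ) γ)
      ((exp (x + s • γ) * Dser (x + s • γ) γ) * Dser (x + s • γ) γ
        + exp (x + s • γ) *
          (∑' i : ℕ, ((-1 : ℝ) ^ i / (Nat.factorial (i + 1) : ℝ)) • adsum (x + s • γ) γ i)) s :=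
    fun s => transfer_hasDerivAt (hasDerivAt_G_line x γ s)
  have hD : deriv (fun s : ℝ => exp (x + s • γ))
      = fun s : ℝ => exp (x + s • γ) * Dser (x + s • γ) γ :=
    funext fun s => (hF s).deriv
  refine ⟨fun s => (hF s).differentiableAt, fun s => ?_, ?_⟩
  · rw [hD]
    exact (hG s).differentiableAt
  · rw [hD]; refine (hG 0).deriv.trans ?_
    simp only [zero_smul, add_zero]
    rw [mul_assoc, ← mul_add]
    have eD : Dser x γ
        = ∑' i : ℕ, ((-1 : ℝ) ^ i / (Nat.factorial (i + 1) : ℝ)) • ((adM x ^ i) γ) := by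
      rw [Dser]
      exact tsum_congr fun i => by rw [adM_eq]
    have eC : (∑' i : ℕ, ((-1 : ℝ) ^ i / (Nat.factorial (i + 1) : ℝ)) • adsum x γ i)
        = ∑' i : ℕ, ((-1 : ℝ) ^ i / (Nat.factorial (i + 1) : ℝ)) •
            ∑ r ∈ Finset.range i, (adM x ^ r) (adM γ ((adM x ^ (i - 1 - r)) γ)) := by
      refine tsum_congr fun i => ?_
      congr 1
    rw [eD, eC]
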